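/- Let d ≥ 2 and s ≥ 3 be integers and let G be a {K_{1,d}, P_s}-free graph. Then tree-α(G) ≤ (d−1)(s−2). -/

import Mathlib

/-
Common definitions: tree decompositions, tree-independence number, treewidth,
independence/clique numbers, induced-subgraph freeness, and the special graphs
appearing in the paper "Treewidth versus clique number: induced minors,
distance to block graphs ... (tree-independence number)".
-/

namespace PaperTIN

open SimpleGraph

variable {V W : Type}

/-- A set of vertices is independent if no two of its members are adjacent. -/
def IsIndepSet (G : SimpleGraph V) (s : Set V) : Prop :=
  s.Pairwise fun u v => ¬ G.Adj u v

/-- The maximum size of an independent set of `G` contained in `s`,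
i.e. the independence number `α(G[s])` of the induced subgraph `G[s]`. -/
noncomputable def indepNumOn (G : SimpleGraph V) (s : Set V) : ℕ :=
  sSup {n | ∃ t : Finset V, ↑t ⊆ s ∧ IsIndepSet G ↑t ∧ t.card = n}

/-- The independence number `α(G)`. -/
noncomputable def indepNum (G : SimpleGraph V) : ℕ :=
  indepNumOn G Set.univ

/-- The maximum size of a clique of `G` contained in `s`,
i.e. the clique number `ω(G[s])` of the induced subgraph `G[s]`. -/
noncomputable def cliqueNumOn (G : SimpleGraph V) (s : Set V) : ℕ :=
  sSup {n | ∃ t : Finset V, ↑t ⊆ s ∧ G.IsClique ↑t ∧ t.card = n}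

/-- A tree decomposition of a graph `G`: a tree together with a bag for each node,
such that every vertex is in some bag, both endpoints of every edge lie in a common
bag, and for every vertex the set of nodes whose bag contains it induces a connected
(hence nonempty) subtree of the tree. -/
structure TreeDecomp {V : Type} (G : SimpleGraph V) where
  ι : Type
  tree : SimpleGraph ι
  isTree : tree.IsTree
  bag : ι → Set V
  bag_vert : ∀ v : V, ∃ t : ι, v ∈ bag t
  bag_edge : ∀ ⦃u v : V⦄, G.Adj u v → ∃ t : ι, u ∈ bag t ∧ v ∈ bag t
  bag_conn : ∀ v : V, (tree.induce {t : ι | v ∈ bag t}).Connected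

/-- The independence number of a tree decomposition: the maximum, over all bags,
of the independence number of the subgraph induced by the bag. -/
noncomputable def TreeDecomp.alpha {G : SimpleGraph V} (D : TreeDecomp G) : ℕ :=
  sSup {n | ∃ t : D.ι, n = indepNumOn G (D.bag t)}

/-- The tree-independence number `tree-α(G)`: the minimum independence number of a
tree decomposition of `G`. -/
noncomputable def treeIndepNum (G : SimpleGraph V) : ℕ :=
  sInf {n | ∃ D : TreeDecomp G, D.alpha = n}

/-- The width of a tree decomposition: maximum bag size minus one. -/
noncomputable def TreeDecomp.width {G : SimpleGraph V} (D : TreeDecomp G) : ℕ :=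
  sSup {n | ∃ t : D.ι, n = (D.bag t).ncard} - 1

/-- The treewidth `tw(G)`: the minimum width of a tree decomposition of `G`. -/
noncomputable def treewidth (G : SimpleGraph V) : ℕ :=
  sInf {n | ∃ D : TreeDecomp G, D.width = n}

/-- `Free H G` means that `G` has no induced subgraph isomorphic to `H`
(equivalently, there is no graph embedding of `H` into `G`). -/
def Free (H : SimpleGraph W) (G : SimpleGraph V) : Prop :=
  IsEmpty (H ↪g G)

/-- The star `K_{1,d}` with `d` leaves. -/
def star (d : ℕ) : SimpleGraph (Fin 1 ⊕ Fin d) :=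
  completeBipartiteGraph (Fin 1) (Fin d)

/-- The complete bipartite graph `K_{m,n}`. -/
def biclique (m n : ℕ) : SimpleGraph (Fin m ⊕ Fin n) :=
  completeBipartiteGraph (Fin m) (Fin n)

/-- The open neighborhood `N(X)` of a set of vertices: all vertices having a neighbor in `X`. -/
def nbhdSet (G : SimpleGraph V) (X : Set V) : Set V :=
  {v | ∃ x ∈ X, G.Adj x v}

/-- The closed neighborhood `N[X]` of a set of vertices. -/
def closedNbhdSet (G : SimpleGraph V) (X : Set V) : Set V :=
  X ∪ nbhdSet G X

/-- `S_p`: the tree obtained from the claw `K_{1,3}` by subdividing each edge exactly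
`p-1` times; equivalently a spider with three legs, each a path on `p` vertices,
attached to a center vertex. -/
def spider (p : ℕ) : SimpleGraph (Unit ⊕ Fin 3 × Fin p) :=
  SimpleGraph.fromRel fun a b =>
    (∃ j : Fin 3, ∃ i : Fin p, a = Sum.inl () ∧ b = Sum.inr (j, i) ∧ (i : ℕ) = 0) ∨
    (∃ j : Fin 3, ∃ i i' : Fin p, a = Sum.inr (j, i) ∧ b = Sum.inr (j, i') ∧
      (i' : ℕ) = (i : ℕ) + 1)

/-- The disjoint union of `k` copies of a graph `H`. -/
def kCopies (k : ℕ) (H : SimpleGraph W) : SimpleGraph (Fin k × W) where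
  Adj a b := a.1 = b.1 ∧ H.Adj a.2 b.2
  symm := by constructor; rintro a b ⟨h1, h2⟩; exact ⟨h1.symm, h2.symm⟩
  loopless := by constructor; rintro a ⟨-, h⟩; exact H.loopless.irrefl _ h

/-- Membership in the family `𝒮`: every connected component is a tree with at most three
leaves. Equivalently, the graph is a forest and each connected component contains at most
three vertices of degree one. -/
def InS [Fintype W] (S : SimpleGraph W) : Prop :=
  S.IsAcyclic ∧ ∀ c : S.ConnectedComponent,
    {v : W | S.connectedComponentMk v = c ∧ (S.neighborSet v).ncard = 1}.ncard ≤ 3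

/-- Membership in the family `L(𝒮)`: the graph is isomorphic to the line graph of some
member of `𝒮`. -/
def InLS [Fintype V] (T : SimpleGraph V) : Prop :=
  ∃ (W : Type) (_ : Fintype W) (S : SimpleGraph W),
    InS S ∧ Nonempty (T ≃g S.lineGraph)

/-- The induced biclique number of `G`: the largest `n` such that `G` contains an
induced subgraph isomorphic to `K_{n,n}`. -/
noncomputable def ibn (G : SimpleGraph V) : ℕ :=
  sSup {n | Nonempty (completeBipartiteGraph (Fin n) (Fin n) ↪g G)}

/-- The `i`-th bag (0-indexed) of the `h`-backbone structure of an induced path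
`f : P_ℓ ↪g G`: the closed neighborhood of the set of vertices
`{v_i, …, v_{i+h-1}}` of the path. -/
def backboneBag (G : SimpleGraph V) {ℓ : ℕ} (f : pathGraph ℓ ↪g G) (h i : ℕ) : Set V :=
  closedNbhdSet G (⇑f '' {j : Fin ℓ | i ≤ (j : ℕ) ∧ (j : ℕ) ≤ i + h - 1})

/-- The vertex set (as a set of vertices of the ambient graph) of a connected component
of the induced subgraph `G[s]`. -/
def componentVerts {G : SimpleGraph V} {s : Set V}
    (C : (G.induce s).ConnectedComponent) : Set V :=
  Subtype.val '' {w : s | (G.induce s).connectedComponentMk w = C}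

section Gyarfas

variable {V : Type} (G : SimpleGraph V)

/-- closed neighborhood of a single vertex -/
def ncv (w : V) : Set V := {x | x = w ∨ G.Adj w x}

/-- union of closed neighborhoods of a list of vertices -/
def npc (L : List V) : Set V := {x | ∃ w ∈ L, x ∈ ncv G w}

/-- open neighborhood of a set -/
def nopen (S : Set V) : Set V := {x | ∃ y ∈ S, G.Adj y x}

def stepIn (A : Set V) : V → V → Prop := fun a b => b ∈ A ∧ G.Adj a b

def reachIn (A : Set V) : V → V → Prop := Relation.ReflTransGen (stepIn G A)

def compIn (A : Set V) (v : V) : Set V := {u | u ∈ A ∧ reachIn G A v u}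

variable {G}

lemma mem_ncv_self (w : V) : w ∈ ncv G w := Or.inl rfl

lemma adj_of_mem_ncv {w x : V} (h : x ∈ ncv G w) (hne : x ≠ w) : G.Adj w x := h.resolve_left hne

lemma mem_ncv_of_adj {w x : V} (h : G.Adj w x) : x ∈ ncv G w := Or.inr h

lemma mem_npc_of_mem {L : List V} {w : V} (hw : w ∈ L) {x : V} (hx : x ∈ ncv G w) :
    x ∈ npc G L := ⟨w, hw, hx⟩

lemma self_mem_npc {L : List V} {w : V} (hw : w ∈ L) : w ∈ npc G L :=
  mem_npc_of_mem hw (mem_ncv_self w)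

lemma npc_mono {L L' : List V} (h : ∀ x ∈ L, x ∈ L') : npc G L ⊆ npc G L' := by
  rintro x ⟨w, hw, hx⟩; exact ⟨w, h w hw, hx⟩

lemma mem_compIn_self {A : Set V} {v : V} (hv : v ∈ A) : v ∈ compIn G A v :=
  ⟨hv, Relation.ReflTransGen.refl⟩

lemma compIn_subset {A : Set V} {v : V} : compIn G A v ⊆ A := fun _ h => h.1

lemma compIn_closed {A : Set V} {v u b : V} (hu : u ∈ compIn G A v) (hb : b ∈ A)
    (hadj : G.Adj u b) : b ∈ compIn G A v :=
  ⟨hb, hu.2.tail ⟨hb, hadj⟩⟩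

lemma reach_last_mem {A : Set V} {x y : V} (h : reachIn G A x y) : y = x ∨ y ∈ A := by
  induction h with
  | refl => exact Or.inl rfl
  | tail _ hstep _ => exact Or.inr hstep.1

lemma reach_symm {A : Set V} {x y : V} (hx : x ∈ A) (h : reachIn G A x y) : reachIn G A y x := by
  induction h with
  | refl => exact Relation.ReflTransGen.refl
  | @tail b c hxb hstep ih =>
    have hb : b ∈ A := by
      rcases reach_last_mem hxb with h' | h'
      · exact h' ▸ hx
      · exact h'
    exact Relation.ReflTransGen.trans (Relation.ReflTransGen.single ⟨hb, hstep.2.symm⟩) ih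

lemma reach_compIn {A : Set V} {v u : V} (h : reachIn G A v u) :
    reachIn G (compIn G A v) v u := by
  induction h with
  | refl => exact Relation.ReflTransGen.refl
  | @tail b c hvb hstep ih =>
    exact ih.tail ⟨⟨hstep.1, hvb.tail hstep⟩, hstep.2⟩

lemma compIn_conn {A : Set V} {v : V} (hv : v ∈ A) {u u' : V}
    (hu : u ∈ compIn G A v) (hu' : u' ∈ compIn G A v) :
    reachIn G (compIn G A v) u u' := by
  have h1 : reachIn G (compIn G A v) v u := reach_compIn hu.2
  have h2 : reachIn G (compIn G A v) v u' := reach_compIn hu'.2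
  exact Relation.ReflTransGen.trans (reach_symm (mem_compIn_self hv) h1) h2

lemma compIn_eq {A : Set V} {v v' : V} (hv : v ∈ A) (h : v' ∈ compIn G A v) :
    compIn G A v' = compIn G A v := by
  ext u
  constructor
  · rintro ⟨huA, hr⟩
    exact ⟨huA, h.2.trans hr⟩
  · rintro ⟨huA, hr⟩
    exact ⟨huA, (reach_symm hv h.2).trans hr⟩

/-- walk-exit lemma: a reach-walk starting in `Q` and ending outside `Q` has a first
exit step; the pre-exit point lies in the component of the start within `A ∩ Q`. -/
lemma exitLemma {A Q : Set V} {u c : V} (h : reachIn G A u c) (huA : u ∈ A) (hu : u ∈ Q)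
    (hc : c ∉ Q) : ∃ a b, a ∈ compIn G (A ∩ Q) u ∧ b ∈ A ∧ b ∉ Q ∧ G.Adj a b := by
  have main : ∀ x, reachIn G A u x →
      (x ∈ Q ∧ x ∈ compIn G (A ∩ Q) u) ∨ (∃ a b, a ∈ compIn G (A ∩ Q) u ∧ b ∈ A ∧ b ∉ Q ∧ G.Adj a b) := by
    intro x hx
    induction hx with
    | refl => exact Or.inl ⟨hu, mem_compIn_self ⟨huA, hu⟩⟩
    | @tail b c' hub hstep ih =>
      rcases ih with ⟨hbQ, hbC⟩ | hdone
      · by_cases hcQ : c' ∈ Q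
        · exact Or.inl ⟨hcQ, compIn_closed hbC ⟨hstep.1, hcQ⟩ hstep.2⟩
        · exact Or.inr ⟨b, c', hbC, hstep.1, hcQ, hstep.2⟩
      · exact Or.inr hdone
  rcases main c h with ⟨hcQ, _⟩ | hdone
  · exact absurd hcQ hc
  · exact hdone


/-! ### Induced paths as lists -/

variable (G) in
/-- `IPath L`: `L` is an induced path, listed from one end (head = an endpoint). -/
inductive IPath : List V → Prop
  | nil : IPath []
  | single (a : V) : IPath [a]
  | cons {a b : V} {L : List V} (hab : G.Adj a b)
      (hL : ∀ x ∈ L, a ≠ x ∧ ¬ G.Adj a x) (h : IPath (b :: L)) : IPath (a :: b :: L)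

lemma IPath.take {L : List V} (h : IPath G L) : ∀ n, IPath G (L.take n) := by
  induction h with
  | nil => intro n; simpa using IPath.nil
  | single a =>
    intro n
    match n with
    | 0 => simpa using IPath.nil
    | n+1 => simpa using IPath.single a
  | @cons a b L hab hL h ih =>
    intro n
    match n with
    | 0 => simpa using IPath.nil
    | 1 => simpa using IPath.single a
    | n+2 =>
      have := ih (n+1)
      simp only [List.take_succ_cons] at this ⊢
      exact IPath.cons hab (fun x hx => hL x (List.mem_of_mem_take hx)) this

lemma IPath.nodup {L : List V} (h : IPath G L) : L.Nodup := by
  induction h with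
  | nil => simp
  | single a => simp
  | @cons a b L hab hL h ih =>
    refine List.nodup_cons.2 ⟨?_, ih⟩
    intro hmem
    rcases List.mem_cons.1 hmem with rfl | hmem
    · exact G.irrefl hab
    · exact (hL a hmem).1 rfl

lemma IPath.adj_succ {L : List V} (h : IPath G L) :
    ∀ i, (hi : i + 1 < L.length) → G.Adj (L.get ⟨i, Nat.lt_of_succ_lt hi⟩) (L.get ⟨i+1, hi⟩) := by
  induction h with
  | nil => intro i hi; simp at hi
  | single a => intro i hi; simp at hi
  | @cons a b L hab hL h ih =>
    intro i hi
    match i with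
    | 0 => exact hab
    | i+1 =>
      have hi' : i + 1 < (b :: L).length := by
        simp only [List.length_cons] at hi ⊢; omega
      exact ih i hi'

lemma IPath.not_adj {L : List V} (h : IPath G L) :
    ∀ i j, (hij : i + 1 < j) → (hj : j < L.length) →
      ¬ G.Adj (L.get ⟨i, by omega⟩) (L.get ⟨j, hj⟩) := by
  induction h with
  | nil => intro i j hij hj; simp at hj
  | single a => intro i j hij hj; simp only [List.length_singleton] at hj; omega
  | @cons a b L hab hL h ih =>
    intro i j hij hj
    match i, j with
    | 0, j+2 =>
      have hj' : j < L.length := by simp only [List.length_cons] at hj; omega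
      have hmem : (a :: b :: L).get ⟨j+2, hj⟩ ∈ L := by
        have : (a :: b :: L).get ⟨j+2, hj⟩ = L.get ⟨j, hj'⟩ := by simp
        rw [this]; exact L.get_mem _
      have := hL _ hmem
      exact fun hadj => this.2 (by simpa using hadj)
    | i+1, j+1 =>
      have hj' : j < (b :: L).length := by simp only [List.length_cons] at hj ⊢; omega
      have := ih i j (by omega) hj'
      exact fun hadj => this (by simpa using hadj)

lemma ipath_embedding {L : List V} (h : IPath G L) {m : ℕ} (hm : L.length = m) :
    Nonempty (pathGraph m ↪g G) := by
  refine ⟨⟨⟨fun i => L.get (Fin.cast hm.symm i), ?_⟩, ?_⟩⟩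
  · intro i j hij
    have := (List.nodup_iff_injective_get).1 h.nodup hij
    simpa [Fin.ext_iff] using this
  · intro i j
    show G.Adj (L.get (Fin.cast hm.symm i)) (L.get (Fin.cast hm.symm j)) ↔ _
    simp only [Function.Embedding.coeFn_mk, pathGraph_adj]
    constructor
    · intro hadj
      by_contra hcon
      push_neg at hcon
      obtain ⟨hc1, hc2⟩ := hcon
      rcases lt_trichotomy (i : ℕ) (j : ℕ) with hlt | heq | hgt
      · have hij2 : (i : ℕ) + 1 < (j : ℕ) := by omega
        have hjL : (j : ℕ) < L.length := by omega
        have e1 : Fin.cast hm.symm i = (⟨(i : ℕ), by omega⟩ : Fin L.length) := rfl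
        have e2 : Fin.cast hm.symm j = (⟨(j : ℕ), hjL⟩ : Fin L.length) := rfl
        rw [e1, e2] at hadj
        exact h.not_adj i j hij2 hjL hadj
      · have : i = j := Fin.ext heq
        subst this
        exact G.irrefl hadj
      · have hij2 : (j : ℕ) + 1 < (i : ℕ) := by omega
        have hiL : (i : ℕ) < L.length := by omega
        have e1 : Fin.cast hm.symm j = (⟨(j : ℕ), by omega⟩ : Fin L.length) := rfl
        have e2 : Fin.cast hm.symm i = (⟨(i : ℕ), hiL⟩ : Fin L.length) := rfl
        rw [e1, e2] at hadj
        exact h.not_adj j i hij2 hiL hadj.symm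
    · rintro (hij | hji)
      · have hi1 : (i : ℕ) + 1 < L.length := by omega
        have := h.adj_succ i hi1
        have e2 : Fin.cast hm.symm j = (⟨(i : ℕ) + 1, hi1⟩ : Fin L.length) := Fin.ext (by simpa using hij.symm)
        rw [e2]
        exact this
      · have hj1 : (j : ℕ) + 1 < L.length := by omega
        have := (h.adj_succ j hj1).symm
        have e2 : Fin.cast hm.symm i = (⟨(j : ℕ) + 1, hj1⟩ : Fin L.length) := Fin.ext (by simpa using hji.symm)
        rw [e2]
        exact this

/-- From `P_s`-freeness: induced-path lists have length at most `s-1`. -/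
lemma ipath_length_le {s : ℕ} (h2 : Free (SimpleGraph.pathGraph s) G) {L : List V}
    (h : IPath G L) : L.length ≤ s - 1 := by
  by_contra hcon
  push_neg at hcon
  have hs : s ≤ L.length := by omega
  have htake : IPath G (L.take s) := h.take s
  have hlen : (L.take s).length = s := by simp [hs]
  obtain ⟨emb⟩ := ipath_embedding htake hlen
  exact h2.false emb


/-! ### Star-freeness: independence in closed neighborhoods -/

lemma indep_ncv_card {d : ℕ} (h1 : Free (star d) G) (hd : 2 ≤ d) (w : V) (T : Finset V)
    (hsub : ∀ x ∈ T, x ∈ ncv G w)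
    (hind : (T : Set V).Pairwise fun u v => ¬ G.Adj u v) : T.card ≤ d - 1 := by
  by_contra hcon
  push_neg at hcon
  have hdT : d ≤ T.card := by omega
  by_cases hw : w ∈ T
  · have hsingle : T ⊆ {w} := by
      intro x hx
      rcases hsub x hx with rfl | hadj
      · exact Finset.mem_singleton_self _
      · by_cases hxw : x = w
        · exact hxw ▸ Finset.mem_singleton_self _
        · exact absurd hadj.symm (hind (by exact_mod_cast hx) (by exact_mod_cast hw) hxw)
    have := Finset.card_le_card hsingle
    simp only [Finset.card_singleton] at this
    omega
  · obtain ⟨T', hT'sub, hT'card⟩ := Finset.exists_subset_card_eq hdT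
    have e := (Finset.equivFinOfCardEq hT'card).symm
    have hadjall : ∀ x ∈ T', G.Adj w x := by
      intro x hx
      rcases hsub x (hT'sub hx) with rfl | hadj
      · exact absurd (hT'sub hx) hw
      · exact hadj
    have hne : ∀ i : Fin d, ((e i : V) ≠ w) := by
      intro i heq
      exact hw (heq ▸ hT'sub (e i).2)
    refine h1.false ⟨⟨Sum.elim (fun _ => w) (fun i => (e i : V)), ?_⟩, ?_⟩
    · rintro (i | i) (j | j) hij
      · simp [Subsingleton.elim i j]
      · exact absurd hij.symm (hne j)
      · exact absurd hij (hne i)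
      · simp only [Sum.elim_inr] at hij
        have : (e i : V) = (e j : V) := hij
        have := e.injective (Subtype.ext this)
        rw [this]
    · rintro (i | i) (j | j)
      · show G.Adj (Sum.elim (fun _ : Fin 1 => w) (fun i => (e i : V)) (Sum.inl i)) (Sum.elim (fun _ : Fin 1 => w) (fun i => (e i : V)) (Sum.inl j)) ↔ _
        simp [star, G.irrefl]
      · show G.Adj (Sum.elim (fun _ : Fin 1 => w) (fun i => (e i : V)) (Sum.inl i)) (Sum.elim (fun _ : Fin 1 => w) (fun i => (e i : V)) (Sum.inr j)) ↔ _
        simp only [Sum.elim_inl, Sum.elim_inr, star, completeBipartiteGraph_adj]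
        simp [hadjall _ (e j).2]
      · show G.Adj (Sum.elim (fun _ : Fin 1 => w) (fun i => (e i : V)) (Sum.inr i)) (Sum.elim (fun _ : Fin 1 => w) (fun i => (e i : V)) (Sum.inl j)) ↔ _
        simp only [Sum.elim_inl, Sum.elim_inr, star, completeBipartiteGraph_adj]
        simp [(hadjall _ (e i).2).symm]
      · simp only [Sum.elim_inr, star, completeBipartiteGraph_adj]
        simp only [Sum.isLeft_inr, Sum.isRight_inr, Bool.false_eq_true, false_and, and_false,
          or_self, iff_false]
        by_cases hij : i = j
        · subst hij; exact G.irrefl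
        · exact hind (by exact_mod_cast hT'sub (e i).2) (by exact_mod_cast hT'sub (e j).2)
            (fun hcc => hij (e.injective (Subtype.ext hcc)))

lemma indep_npc_card {d : ℕ} (h1 : Free (star d) G) (hd : 2 ≤ d) (L : List V) (T : Finset V)
    (hsub : (T : Set V) ⊆ npc G L)
    (hind : (T : Set V).Pairwise fun u v => ¬ G.Adj u v) : T.card ≤ (d - 1) * L.length := by
  classical
  induction L generalizing T with
  | nil =>
    have : T = ∅ := by
      rw [Finset.eq_empty_iff_forall_notMem]
      intro x hx
      rcases hsub (by exact_mod_cast hx) with ⟨w, hw, _⟩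
      simp at hw
    simp [this]
  | cons w L ih =>
    set T1 := T.filter (fun x => x ∈ ncv G w) with hT1
    set T2 := T.filter (fun x => x ∉ ncv G w) with hT2
    have hcard : T1.card + T2.card = T.card := Finset.card_filter_add_card_filter_not _
    have h1' : T1.card ≤ d - 1 := by
      refine indep_ncv_card h1 hd w T1 ?_ ?_
      · intro x hx; exact (Finset.mem_filter.1 hx).2
      · exact hind.mono (by intro x hx; exact Finset.mem_coe.2 (Finset.filter_subset _ _ (Finset.mem_coe.1 hx)))
    have h2' : T2.card ≤ (d - 1) * L.length := by
      refine ih T2 ?_ ?_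
      · intro x hx
        have hx' := Finset.mem_coe.1 hx
        obtain ⟨hxT, hxn⟩ := Finset.mem_filter.1 hx'
        rcases hsub (Finset.mem_coe.2 hxT) with ⟨p, hp, hxp⟩
        rcases List.mem_cons.1 hp with rfl | hp'
        · exact absurd hxp hxn
        · exact ⟨p, hp', hxp⟩
      · exact hind.mono (by intro x hx; exact Finset.mem_coe.2 (Finset.filter_subset _ _ (Finset.mem_coe.1 hx)))
    calc T.card = T1.card + T2.card := hcard.symm
    _ ≤ (d-1) + (d-1) * L.length := by omega
    _ = (d-1) * (L.length + 1) := by ring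
    _ = (d-1) * (w :: L).length := by simp

/-! ### The Gyárfás-style recursion -/

variable [Nonempty V]

noncomputable def repSet (S : Set V) : V := Classical.epsilon (· ∈ S)

lemma repSet_mem {S : Set V} (h : S.Nonempty) : repSet S ∈ S := Classical.epsilon_spec (p := (· ∈ S)) h

variable (G) in
noncomputable def pivot (w : V) (Cp D : Set V) : V :=
  Classical.epsilon fun x => G.Adj w x ∧ x ∈ Cp ∧ x ∉ D ∧ ∃ y ∈ D, G.Adj x y

def pathOf (l : List (V × Set V)) : List V := l.map Prod.fst

@[simp] lemma pathOf_nil : pathOf ([] : List (V × Set V)) = [] := rfl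
@[simp] lemma pathOf_cons (x : V × Set V) (l : List (V × Set V)) :
    pathOf (x :: l) = x.1 :: pathOf l := rfl

def Cof : List (V × Set V) → Set V
  | [] => ∅
  | x :: _ => x.2

@[simp] lemma Cof_cons (x : V × Set V) (l : List (V × Set V)) : Cof (x :: l) = x.2 := rfl

variable (G) in
def bagL (l : List (V × Set V)) : Set V :=
  npc G (pathOf l) ∩ (Cof l ∪ nopen G (Cof l) ∪ {x | x ∈ pathOf l})

lemma bagL_subset_npc (l : List (V × Set V)) : bagL G l ⊆ npc G (pathOf l) :=
  Set.inter_subset_left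

variable (G) in
inductive Valid : List (V × Set V) → Prop
  | center (v : V) : Valid [(repSet (compIn G Set.univ v), compIn G Set.univ v)]
  | child {w : V} {Cp : Set V} {rest : List (V × Set V)} (h : Valid ((w, Cp) :: rest))
      {v : V} (hv : v ∈ Cp) (hv' : v ∉ ncv G w) :
      Valid ((pivot G w Cp (compIn G (Cp \ ncv G w) v), compIn G (Cp \ ncv G w) v)
        :: (w, Cp) :: rest)

lemma valid_ne_nil {l : List (V × Set V)} (h : Valid G l) : l ≠ [] := by
  cases h <;> simp

/-- All invariants carried by a node of the recursion. -/
structure InvH (G : SimpleGraph V) (w : V) (C : Set V) (rest : List (V × Set V)) : Prop where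
  cne : C.Nonempty
  conn : ∀ u ∈ C, ∀ u' ∈ C, reachIn G C u u'
  anchor : (ncv G w ∩ C).Nonempty
  interf : ∀ x ∈ nopen G C, x ∉ C → x ∈ npc G (pathOf ((w, C) :: rest))
  sep : ∀ x ∈ C, x ∉ npc G (pathOf rest)
  ipath : IPath G (pathOf ((w, C) :: rest))
  hwC : rest ≠ [] → w ∉ C

/-- The chosen pivot vertex indeed satisfies its defining property. -/
lemma pivot_spec {w : V} {Cp : Set V} {rest : List (V × Set V)}
    (hI : InvH G w Cp rest) {v : V} (hv : v ∈ Cp) (hv' : v ∉ ncv G w) :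
    G.Adj w (pivot G w Cp (compIn G (Cp \ ncv G w) v)) ∧
    (pivot G w Cp (compIn G (Cp \ ncv G w) v)) ∈ Cp ∧
    (pivot G w Cp (compIn G (Cp \ ncv G w) v)) ∉ compIn G (Cp \ ncv G w) v ∧
    ∃ y ∈ compIn G (Cp \ ncv G w) v, G.Adj (pivot G w Cp (compIn G (Cp \ ncv G w) v)) y := by
  obtain ⟨c₀, hc₀n, hc₀C⟩ := hI.anchor
  have hreach : reachIn G Cp v c₀ := hI.conn v hv c₀ hc₀C
  have hAQ : Cp ∩ (Cp \ ncv G w) = Cp \ ncv G w :=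
    Set.inter_eq_self_of_subset_right Set.diff_subset
  obtain ⟨a, b, haC, hbCp, hbQ, hab⟩ :=
    exitLemma (Q := Cp \ ncv G w) hreach hv ⟨hv, hv'⟩ (fun hq => hq.2 hc₀n)
  rw [hAQ] at haC
  have hbn : b ∈ ncv G w := by
    by_contra hbn
    exact hbQ ⟨hbCp, hbn⟩
  have hbw : b ≠ w := by
    rintro rfl
    exact haC.1.2 (mem_ncv_of_adj hab.symm)
  have hwb : G.Adj w b := adj_of_mem_ncv hbn hbw
  exact Classical.epsilon_spec (p := fun x => G.Adj w x ∧ x ∈ Cp ∧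
      x ∉ compIn G (Cp \ ncv G w) v ∧ ∃ y ∈ compIn G (Cp \ ncv G w) v, G.Adj x y)
    ⟨b, hwb, hbCp, fun hbD => hbQ (compIn_subset hbD), a, haC, hab.symm⟩

lemma valid_inv {l : List (V × Set V)} (h : Valid G l) :
    ∀ w C rest, l = (w, C) :: rest → InvH G w C rest := by
  induction h with
  | center v =>
    intro w C rest heq
    injection heq with h1 h2
    injection h1 with h1a h1b
    subst h1a; subst h1b; subst h2
    have hv : v ∈ compIn G Set.univ v := mem_compIn_self (Set.mem_univ v)
    refine ⟨⟨v, hv⟩, fun u hu u' hu' => compIn_conn (Set.mem_univ v) hu hu', ?_, ?_, ?_, ?_, ?_⟩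
    · exact ⟨repSet _, mem_ncv_self _, repSet_mem ⟨v, hv⟩⟩
    · rintro x ⟨y, hy, hadj⟩ hx
      exact absurd (compIn_closed hy (Set.mem_univ x) hadj) hx
    · intro x _ hx
      simp [npc] at hx
    · exact IPath.single _
    · intro h; exact absurd rfl h
  | @child w Cp rest hval v hv hv' ih =>
    intro w' C' rest' heq
    have hI : InvH G w Cp rest := ih w Cp rest rfl
    obtain ⟨hadj, hPCp, hPD, y, hyD, hPy⟩ := pivot_spec hI hv hv'
    injection heq with h1 h2
    injection h1 with h1a h1b
    subst h1a; subst h1b; subst h2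
    have hvD : v ∈ compIn G (Cp \ ncv G w) v := mem_compIn_self ⟨hv, hv'⟩
    refine ⟨⟨v, hvD⟩, fun u hu u' hu' => compIn_conn ((Set.mem_diff v).2 ⟨hv, hv'⟩) hu hu', ?_, ?_, ?_, ?_, ?_⟩
    · exact ⟨y, mem_ncv_of_adj hPy, hyD⟩
    · rintro x ⟨z, hz, hadjzx⟩ hx
      by_cases hxCp : x ∈ Cp
      · by_cases hxn : x ∈ ncv G w
        · exact mem_npc_of_mem (by simp) hxn
        · exact absurd (compIn_closed hz ⟨hxCp, hxn⟩ hadjzx) hx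
      · have : x ∈ npc G (pathOf ((w, Cp) :: rest)) :=
          hI.interf x ⟨z, (compIn_subset hz).1, hadjzx⟩ hxCp
        exact npc_mono (by intro t ht; simp at ht ⊢; tauto) this
    · rintro x hx ⟨p, hp, hxp⟩
      rcases List.mem_cons.1 hp with rfl | hp'
      · exact (compIn_subset hx).2 hxp
      · exact hI.sep x (compIn_subset hx).1 ⟨p, hp', hxp⟩
    · refine IPath.cons hadj.symm ?_ hI.ipath
      intro x hx
      have hnp : pivot G w Cp (compIn G (Cp \ ncv G w) v) ∉ npc G (pathOf rest) :=
        hI.sep _ hPCp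
      constructor
      · rintro rfl
        exact hnp ⟨_, hx, mem_ncv_self _⟩
      · intro hadjx
        exact hnp ⟨x, hx, mem_ncv_of_adj hadjx.symm⟩
    · intro _
      exact hPD

/-- inversion for nodes of length ≥ 2 -/
lemma valid_cons_inv {x y : V × Set V} {rest : List (V × Set V)}
    (h : Valid G (x :: y :: rest)) :
    Valid G (y :: rest) ∧ ∃ v, v ∈ y.2 ∧ v ∉ ncv G y.1 ∧
      x.2 = compIn G (y.2 \ ncv G y.1) v ∧ x.1 = pivot G y.1 y.2 x.2 := by
  cases h with
  | child h hv hv' =>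
    exact ⟨h, _, hv, hv', rfl, rfl⟩

lemma valid_shape {l : List (V × Set V)} (h : Valid G l) :
    ∃ w C rest, l = (w, C) :: rest := by
  cases h with
  | center v => exact ⟨_, _, _, rfl⟩
  | child h hv hv' => exact ⟨_, _, _, rfl⟩

lemma cof_cons_subset {x y : V × Set V} {rest : List (V × Set V)}
    (h : Valid G (x :: y :: rest)) : x.2 ⊆ y.2 := by
  obtain ⟨-, v, -, -, hx2, -⟩ := valid_cons_inv h
  rw [hx2]
  exact fun z hz => (compIn_subset hz).1

/-- chain determinism : nodes of the same length whose current sets share a vertex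
are equal -/
lemma chain_eq {v : V} : ∀ {l l' : List (V × Set V)}, Valid G l → Valid G l' →
    v ∈ Cof l → v ∈ Cof l' → l.length = l'.length → l = l' := by
  intro l
  induction l generalizing v with
  | nil => intro l' h; exact absurd rfl (valid_ne_nil h)
  | cons x t ih =>
    intro l' hl hl' hv hv' hlen
    obtain ⟨w', C', rest', rfl⟩ := valid_shape hl'
    match t, rest', hlen with
    | [], [], _ =>
      cases hl with
      | center v₀ =>
        cases hl' with
        | center v₁ =>
          simp only [Cof_cons] at hv hv'
          have e0 : compIn G Set.univ v₀ = compIn G Set.univ v :=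
            (compIn_eq (Set.mem_univ v₀) hv).symm
          have e1 : compIn G Set.univ v₁ = compIn G Set.univ v :=
            (compIn_eq (Set.mem_univ v₁) hv').symm
          rw [e0, e1]
    | y :: r, y' :: r', hlen =>
      have htail : Valid G (y :: r) := (valid_cons_inv hl).1
      have htail' : Valid G (y' :: r') := (valid_cons_inv hl').1
      have hvt : v ∈ Cof (y :: r) := cof_cons_subset hl hv
      have hvt' : v ∈ Cof (y' :: r') := cof_cons_subset hl' hv'
      have := ih htail htail' hvt hvt' (by simpa using hlen)
      injection this with e1 e2
      subst e2
      cases e1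
      obtain ⟨-, v₀, hv₀, hv₀', hx2, hx1⟩ := valid_cons_inv hl
      obtain ⟨-, v₁, hv₁, hv₁', hx2', hx1'⟩ := valid_cons_inv hl'
      simp only [Cof_cons] at hv hv'
      have ea : compIn G (y.2 \ ncv G y.1) v = compIn G (y.2 \ ncv G y.1) v₀ :=
        compIn_eq ((Set.mem_diff _).2 ⟨hv₀, hv₀'⟩) (hx2 ▸ hv)
      have eb : compIn G (y.2 \ ncv G y.1) v = compIn G (y.2 \ ncv G y.1) v₁ :=
        compIn_eq ((Set.mem_diff _).2 ⟨hv₁, hv₁'⟩) (hx2' ▸ hv')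
      have e2 : x.2 = (w', C').2 := by rw [hx2, hx2', ← ea, ← eb]
      have e1' : x.1 = (w', C').1 := by rw [hx1, hx1', e2]
      rw [show x = (w', C') from Prod.ext e1' e2]
    | [], y' :: r', hlen => simp at hlen
    | y :: r, [], hlen => simp at hlen

lemma mem_bagL_iff {x : V} {l : List (V × Set V)} :
    x ∈ bagL G l ↔ x ∈ npc G (pathOf l) ∧ (x ∈ Cof l ∨ x ∈ nopen G (Cof l) ∨ x ∈ pathOf l) := by
  simp only [bagL, Set.mem_inter_iff, Set.mem_union, Set.mem_setOf_eq, or_assoc]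

variable [Finite V]

lemma cof_ncard_pos {l : List (V × Set V)} (h : Valid G l) : 0 < (Cof l).ncard := by
  obtain ⟨w, C, rest, rfl⟩ := valid_shape h
  have hI := valid_inv h w C rest rfl
  simpa using (Set.ncard_pos (Set.toFinite _)).2 hI.cne

lemma capture (v : V) : ∀ (n : ℕ) (l : List (V × Set V)), Valid G l → v ∈ Cof l →
    (Cof l).ncard ≤ n → ∃ l', Valid G l' ∧ v ∈ bagL G l' := by
  intro n
  induction n with
  | zero =>
    intro l hl hv hcard
    have := cof_ncard_pos hl
    omega
  | succ n ih =>
    intro l hl hv hcard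
    obtain ⟨w, C, rest, rfl⟩ := valid_shape hl
    simp only [Cof_cons] at hv hcard
    by_cases hvn : v ∈ ncv G w
    · exact ⟨_, hl, mem_bagL_iff.2 ⟨mem_npc_of_mem (by simp) hvn, Or.inl hv⟩⟩
    · have hl' := Valid.child hl hv hvn
      have hvD : v ∈ compIn G (C \ ncv G w) v :=
        mem_compIn_self ((Set.mem_diff v).2 ⟨hv, hvn⟩)
      have hI := valid_inv hl w C rest rfl
      obtain ⟨c₀, hc₀n, hc₀C⟩ := hI.anchor
      have hss : compIn G (C \ ncv G w) v ⊂ C := by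
        refine ⟨fun z hz => (compIn_subset hz).1, fun hCD => ?_⟩
        exact (compIn_subset (hCD hc₀C)).2 hc₀n
      have hlt := Set.ncard_lt_ncard hss (Set.toFinite C)
      exact ih _ hl' (by simpa using hvD) (by simp only [Cof_cons]; omega)

lemma captureEdge2 (u v : V) (huv : G.Adj u v) :
    ∀ (n : ℕ) (l : List (V × Set V)), Valid G l → v ∈ Cof l → u ∉ Cof l →
      u ∈ npc G (pathOf l) → (Cof l).ncard ≤ n →
      ∃ l', Valid G l' ∧ u ∈ bagL G l' ∧ v ∈ bagL G l' := by
  intro n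
  induction n with
  | zero =>
    intro l hl hv _ _ hcard
    have := cof_ncard_pos hl
    omega
  | succ n ih =>
    intro l hl hv hu hun hcard
    obtain ⟨w, C, rest, rfl⟩ := valid_shape hl
    simp only [Cof_cons] at hv hu hcard
    by_cases hvn : v ∈ ncv G w
    · refine ⟨_, hl, mem_bagL_iff.2 ⟨hun, Or.inr (Or.inl ⟨v, hv, huv.symm⟩)⟩,
        mem_bagL_iff.2 ⟨mem_npc_of_mem (by simp) hvn, Or.inl hv⟩⟩
    · have hl' := Valid.child hl hv hvn
      have hvD : v ∈ compIn G (C \ ncv G w) v :=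
        mem_compIn_self ((Set.mem_diff v).2 ⟨hv, hvn⟩)
      have hI := valid_inv hl w C rest rfl
      obtain ⟨c₀, hc₀n, hc₀C⟩ := hI.anchor
      have hss : compIn G (C \ ncv G w) v ⊂ C := by
        refine ⟨fun z hz => (compIn_subset hz).1, fun hCD => ?_⟩
        exact (compIn_subset (hCD hc₀C)).2 hc₀n
      have hlt := Set.ncard_lt_ncard hss (Set.toFinite C)
      refine ih _ hl' (by simpa using hvD) ?_ ?_ (by simp only [Cof_cons]; omega)
      · simp only [Cof_cons]
        intro huD
        exact hu (compIn_subset huD).1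
      · exact npc_mono (by intro t ht; simp at ht ⊢; tauto) hun

lemma captureEdge (u v : V) (huv : G.Adj u v) :
    ∀ (n : ℕ) (l : List (V × Set V)), Valid G l → u ∈ Cof l → v ∈ Cof l →
      (Cof l).ncard ≤ n →
      ∃ l', Valid G l' ∧ u ∈ bagL G l' ∧ v ∈ bagL G l' := by
  intro n
  induction n with
  | zero =>
    intro l hl hv _ hcard
    have := cof_ncard_pos hl
    omega
  | succ n ih =>
    intro l hl hu hv hcard
    obtain ⟨w, C, rest, rfl⟩ := valid_shape hl
    simp only [Cof_cons] at hu hv hcard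
    have hI := valid_inv hl w C rest rfl
    by_cases hun : u ∈ ncv G w <;> by_cases hvn : v ∈ ncv G w
    · exact ⟨_, hl, mem_bagL_iff.2 ⟨mem_npc_of_mem (by simp) hun, Or.inl hu⟩,
        mem_bagL_iff.2 ⟨mem_npc_of_mem (by simp) hvn, Or.inl hv⟩⟩
    · -- u captured, v not : switch to phase 2 on the child containing v
      have hl' := Valid.child hl hv hvn
      have hvD : v ∈ compIn G (C \ ncv G w) v :=
        mem_compIn_self ((Set.mem_diff v).2 ⟨hv, hvn⟩)
      obtain ⟨c₀, hc₀n, hc₀C⟩ := hI.anchor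
      have hss : compIn G (C \ ncv G w) v ⊂ C := by
        refine ⟨fun z hz => (compIn_subset hz).1, fun hCD => ?_⟩
        exact (compIn_subset (hCD hc₀C)).2 hc₀n
      have hlt := Set.ncard_lt_ncard hss (Set.toFinite C)
      refine captureEdge2 u v huv n _ hl' (by simpa using hvD) ?_ ?_
        (by simp only [Cof_cons]; omega)
      · simp only [Cof_cons]
        intro huD
        exact (compIn_subset huD).2 hun
      · exact mem_npc_of_mem (by simp) hun
    · -- v captured, u not
      have hl' := Valid.child hl hu hun
      have hvD : u ∈ compIn G (C \ ncv G w) u :=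
        mem_compIn_self ((Set.mem_diff u).2 ⟨hu, hun⟩)
      obtain ⟨c₀, hc₀n, hc₀C⟩ := hI.anchor
      have hss : compIn G (C \ ncv G w) u ⊂ C := by
        refine ⟨fun z hz => (compIn_subset hz).1, fun hCD => ?_⟩
        exact (compIn_subset (hCD hc₀C)).2 hc₀n
      have hlt := Set.ncard_lt_ncard hss (Set.toFinite C)
      have hside1 : v ∉ Cof ((pivot G w C (compIn G (C \ ncv G w) u), compIn G (C \ ncv G w) u) :: (w, C) :: rest) := by
        simp only [Cof_cons]
        intro hvD'
        exact (compIn_subset hvD').2 hvn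
      have hside2 : v ∈ npc G (pathOf ((pivot G w C (compIn G (C \ ncv G w) u), compIn G (C \ ncv G w) u) :: (w, C) :: rest)) :=
        mem_npc_of_mem (by simp) hvn
      obtain ⟨l'', hval, hvb, hub⟩ := captureEdge2 v u huv.symm n _ hl'
        (by simpa using hvD) hside1 hside2 (by simp only [Cof_cons]; omega)
      exact ⟨l'', hval, hub, hvb⟩
    · -- neither captured : descend into the common component
      have hl' := Valid.child hl hv hvn
      have hvD : v ∈ compIn G (C \ ncv G w) v :=
        mem_compIn_self ((Set.mem_diff v).2 ⟨hv, hvn⟩)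
      have huD : u ∈ compIn G (C \ ncv G w) v :=
        compIn_closed hvD ((Set.mem_diff u).2 ⟨hu, hun⟩) huv.symm
      obtain ⟨c₀, hc₀n, hc₀C⟩ := hI.anchor
      have hss : compIn G (C \ ncv G w) v ⊂ C := by
        refine ⟨fun z hz => (compIn_subset hz).1, fun hCD => ?_⟩
        exact (compIn_subset (hCD hc₀C)).2 hc₀n
      have hlt := Set.ncard_lt_ncard hss (Set.toFinite C)
      exact ih _ hl' (by simpa using huD) (by simpa using hvD)
        (by simp only [Cof_cons]; omega)

end Gyarfas

/-! ### Trees from parent maps -/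

section ParentTree

variable {ι : Type}

def parentGraph (p : ι → ι) : SimpleGraph ι := SimpleGraph.fromRel (fun a b => a = p b)

lemma parentGraph_adj_parent (p : ι → ι) {a : ι} (h : a ≠ p a) :
    (parentGraph p).Adj a (p a) := ⟨h, Or.inr rfl⟩

lemma parentGraph_isTree [Nonempty ι] (p : ι → ι) (rk : ι → ℕ) (ρ : ι)
    (hρ : p ρ = ρ) (hdec : ∀ a, a ≠ ρ → rk (p a) < rk a) :
    (parentGraph p).IsTree := by
  classical
  have hne : ∀ a : ι, a ≠ ρ → a ≠ p a := by
    intro a ha h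
    have := hdec a ha
    rw [← h] at this
    omega
  constructor
  · -- connected
    have hreach : ∀ (n : ℕ) (a : ι), rk a ≤ n → (parentGraph p).Reachable a ρ := by
      intro n
      induction n with
      | zero =>
        intro a h
        by_cases ha : a = ρ
        · exact ha ▸ SimpleGraph.Reachable.refl _
        · have := hdec a ha; omega
      | succ n ih =>
        intro a h
        by_cases ha : a = ρ
        · exact ha ▸ SimpleGraph.Reachable.refl _
        · exact ((parentGraph_adj_parent p (hne a ha)).reachable).trans
            (ih (p a) (by have := hdec a ha; omega))
    exact SimpleGraph.Connected.mk (fun a b => (hreach (rk a) a le_rfl).trans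
      (hreach (rk b) b le_rfl).symm)
  · -- acyclic
    intro v c hc
    have hsne : v ∈ c.support := SimpleGraph.Walk.start_mem_support c
    obtain ⟨m, hmS, hmax⟩ := Finset.exists_max_image c.support.toFinset rk
      ⟨v, List.mem_toFinset.2 hsne⟩
    rw [List.mem_toFinset] at hmS
    have hc' := hc.rotate hmS
    have hrot := SimpleGraph.Walk.support_rotate c m hmS
    generalize hq : c.rotate m hmS = q at hc' hrot
    have hsupp : ∀ x, x ∈ q.support → x ∈ c.support := by
      intro x hx
      rcases (SimpleGraph.Walk.mem_support_iff _).1 hx with rfl | hx'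
      · exact hmS
      · exact List.mem_of_mem_tail (hrot.mem_iff.1 hx')
    have hmax' : ∀ x ∈ q.support, rk x ≤ rk m := by
      intro x hx
      exact hmax x (List.mem_toFinset.2 (hsupp x hx))
    have hlen3 : 3 ≤ q.length := hc'.three_le_length
    have hnb : ∀ x, (parentGraph p).Adj m x → x ∈ q.support → x = p m := by
      intro x hadj hxS
      rcases hadj.2 with hmx | hxm
      · exfalso
        have hxρ : x ≠ ρ := by
          rintro rfl
          exact hadj.1 (by rw [hmx, hρ])
        have h1 := hdec x hxρ
        rw [← hmx] at h1
        have h2 := hmax' x hxS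
        omega
      · exact hxm
    cases q with
    | nil => exact hc'.ne_nil rfl
    | @cons _ b _ hadjmb q₁ =>
      have hbm : b ≠ m := fun e => (parentGraph p).irrefl (e ▸ hadjmb)
      obtain ⟨d, hadjmd, q₂, hq₂⟩ :=
        SimpleGraph.Walk.exists_eq_cons_of_ne (fun e => hbm e.symm) q₁.reverse
      have hsup1 : q₁.support.reverse = m :: q₂.support := by
        rw [← SimpleGraph.Walk.support_reverse, hq₂, SimpleGraph.Walk.support_cons]
      have hsup2 : q₂.support = d :: q₂.support.tail :=
        SimpleGraph.Walk.support_eq_cons q₂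
      have hbq : b ∈ (SimpleGraph.Walk.cons hadjmb q₁).support := by
        rw [SimpleGraph.Walk.support_cons]
        exact List.mem_cons.2 (Or.inr q₁.start_mem_support)
      have hdq : d ∈ (SimpleGraph.Walk.cons hadjmb q₁).support := by
        rw [SimpleGraph.Walk.support_cons]
        refine List.mem_cons.2 (Or.inr ?_)
        have : d ∈ q₁.support.reverse := by
          rw [hsup1, hsup2]
          exact List.mem_cons.2 (Or.inr (List.mem_cons.2 (Or.inl rfl)))
        exact List.mem_reverse.1 this
      have hbpm : b = p m := hnb b hadjmb hbq
      have hdpm : d = p m := hnb d hadjmd hdq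
      have hbd : b = d := by rw [hbpm, hdpm]
      have hnodup : q₁.support.Nodup := by
        have h3 := hc'.support_nodup
        rw [SimpleGraph.Walk.support_cons] at h3
        exact h3
      have hq1len : 2 ≤ q₁.length := by
        have h4 : (SimpleGraph.Walk.cons hadjmb q₁).length = q₁.length + 1 := by simp
        omega
      have hsupp_eq : q₁.support = (q₂.support.tail).reverse ++ [d, m] := by
        have h5 : q₁.support = (m :: q₂.support).reverse := by
          rw [← hsup1]; simp
        rw [h5, hsup2]
        simp only [List.reverse_cons, List.tail_cons, List.append_assoc, List.singleton_append]
      have hbhead : q₁.support = b :: q₁.support.tail :=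
        SimpleGraph.Walk.support_eq_cons q₁
      rcases hrev : (q₂.support.tail).reverse with _ | ⟨a, t'⟩
      · rw [hrev] at hsupp_eq
        have h6 : q₁.support.length = 2 := by rw [hsupp_eq]; simp
        rw [SimpleGraph.Walk.length_support] at h6
        omega
      · rw [hrev] at hsupp_eq
        have heq : b :: q₁.support.tail = a :: (t' ++ [d, m]) := by
          rw [← hbhead, hsupp_eq]
          simp
        injection heq with hba htl
        have hbtail : b ∈ q₁.support.tail := by
          rw [htl, hbd]
          simp
        rw [hbhead] at hnodup
        exact (List.nodup_cons.1 hnodup).1 hbtail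

end ParentTree

/-! ### Connectivity of induced subgraphs from reachability within a set -/

lemma induce_connected_of_reach {ι : Type} (T : SimpleGraph ι) (S : Set ι) (hne : S.Nonempty)
    (h : ∀ a, a ∈ S → ∀ b, b ∈ S →
      Relation.ReflTransGen (fun x y => x ∈ S ∧ y ∈ S ∧ T.Adj x y) a b) :
    (T.induce S).Connected := by
  rw [SimpleGraph.connected_iff]
  constructor
  · rintro ⟨a, ha⟩ ⟨b, hb⟩
    have key : ∀ (c : ι), Relation.ReflTransGen (fun x y => x ∈ S ∧ y ∈ S ∧ T.Adj x y) a c →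
        ∀ (hc : c ∈ S), (T.induce S).Reachable ⟨a, ha⟩ ⟨c, hc⟩ := by
      intro c hr
      induction hr with
      | refl => intro hc; rfl
      | @tail b' c' hab' hstep ih =>
        intro hc
        have hb' : b' ∈ S := hstep.1
        have : (T.induce S).Adj ⟨b', hb'⟩ ⟨c', hc⟩ := hstep.2.2
        exact (ih hb').trans this.reachable
    exact key b (h a ha b hb) hb
  · exact ⟨⟨hne.choose, hne.choose_spec⟩⟩

/-! ### The tree decomposition -/

section Decomp

variable {V : Type} {G : SimpleGraph V} [Nonempty V]

lemma path_length_le {s : ℕ} (h2 : Free (SimpleGraph.pathGraph s) G) (hs : 3 ≤ s)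
    {l : List (V × Set V)} (h : Valid G l) : (pathOf l).length ≤ s - 2 := by
  obtain ⟨w, C, rest, rfl⟩ := valid_shape h
  have hI := valid_inv h w C rest rfl
  rcases eq_or_ne rest [] with rfl | hrest
  · simp only [pathOf_cons, pathOf_nil, List.length_cons, List.length_nil]
    omega
  · obtain ⟨c₀, hc₀n, hc₀C⟩ := hI.anchor
    have hwC : w ∉ C := hI.hwC hrest
    have hc₀w : c₀ ≠ w := fun e => hwC (e ▸ hc₀C)
    have hadj : G.Adj w c₀ := adj_of_mem_ncv hc₀n hc₀w
    have hip : IPath G (c₀ :: w :: pathOf rest) := by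
      refine IPath.cons hadj.symm ?_ hI.ipath
      intro x hx
      have hsep := hI.sep c₀ hc₀C
      constructor
      · rintro rfl
        exact hsep ⟨_, hx, mem_ncv_self _⟩
      · intro hadjx
        exact hsep ⟨_, hx, mem_ncv_of_adj hadjx.symm⟩
    have hle := ipath_length_le h2 hip
    simp only [List.length_cons, pathOf_cons] at hle ⊢
    omega

lemma bag_card_le {d s : ℕ} (h1 : Free (star d) G) (h2 : Free (SimpleGraph.pathGraph s) G)
    (hd : 2 ≤ d) (hs : 3 ≤ s) {l : List (V × Set V)} (hl : Valid G l) (T : Finset V)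
    (hsub : ↑T ⊆ bagL G l) (hind : (T : Set V).Pairwise fun u v => ¬ G.Adj u v) :
    T.card ≤ (d - 1) * (s - 2) := by
  have hb := indep_npc_card h1 hd (pathOf l) T
    (fun x hx => bagL_subset_npc _ (hsub hx)) hind
  have hlen := path_length_le h2 hs hl
  calc T.card ≤ (d-1) * (pathOf l).length := hb
  _ ≤ (d-1) * (s-2) := Nat.mul_le_mul_left _ hlen

variable (G) in
abbrev NodeT := {l : List (V × Set V) // Valid G l}

noncomputable def hubN : NodeT G := ⟨_, Valid.center (G := G) (Classical.arbitrary V)⟩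

lemma valid_tail2 {l : List (V × Set V)} (h : Valid G l) (hlen : 2 ≤ l.length) :
    Valid G l.tail := by
  obtain ⟨w, C, rest, rfl⟩ := valid_shape h
  cases rest with
  | nil => simp at hlen
  | cons y r => exact (valid_cons_inv h).1

variable (G) in
noncomputable def parentN : NodeT G → NodeT G := fun a =>
  if h : 2 ≤ a.1.length then ⟨a.1.tail, valid_tail2 a.2 h⟩ else hubN

open Classical in
variable (G) in
noncomputable def rkN : NodeT G → ℕ := fun a => if a = hubN then 0 else a.1.length

lemma hubN_len : (hubN : NodeT G).1.length = 1 := rfl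

lemma parentN_hub : parentN G (hubN : NodeT G) = hubN := by
  unfold parentN
  rw [dif_neg (by rw [hubN_len]; omega)]

lemma treeN_isTree : (parentGraph (parentN G)).IsTree := by
  have hne : Nonempty (NodeT G) := ⟨hubN⟩
  refine parentGraph_isTree _ (rkN G) hubN parentN_hub ?_
  intro a ha
  classical
  have hlen : 1 ≤ a.1.length := List.length_pos_iff.2 (valid_ne_nil a.2)
  have hra : rkN G a = a.1.length := if_neg ha
  have hb : rkN G (parentN G a) ≤ (parentN G a).1.length := by
    by_cases hch : parentN G a = hubN
    · unfold rkN
      rw [if_pos hch]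
      omega
    · unfold rkN
      rw [if_neg hch]
  by_cases h2 : 2 ≤ a.1.length
  · have hp : (parentN G a).1.length = a.1.length - 1 := by
      unfold parentN
      rw [dif_pos h2]
      simp [List.length_tail]
    omega
  · have hp : parentN G a = hubN := by
      unfold parentN
      rw [dif_neg h2]
    rw [hp]
    unfold rkN
    rw [if_pos rfl, if_neg ha]
    omega

lemma adj_parent_cons {x y : V × Set V} {rest : List (V × Set V)}
    (h : Valid G (x :: y :: rest)) (h' : Valid G (y :: rest)) :
    (parentGraph (parentN G)).Adj ⟨x :: y :: rest, h⟩ ⟨y :: rest, h'⟩ := by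
  have hp : parentN G ⟨x :: y :: rest, h⟩ = ⟨y :: rest, h'⟩ := by
    unfold parentN
    rw [dif_pos (by simp)]
    rfl
  refine ⟨?_, Or.inr hp.symm⟩
  intro he
  have := congrArg (fun t : NodeT G => t.1.length) he
  simp at this

variable (G) in
def SAdj (v : V) : NodeT G → NodeT G → Prop := fun a b =>
  v ∈ bagL G a.1 ∧ v ∈ bagL G b.1 ∧ (parentGraph (parentN G)).Adj a b

lemma sadj_symm {v : V} : Symmetric (SAdj G v) :=
  fun _ _ ⟨h1, h2, h3⟩ => ⟨h2, h1, h3.symm⟩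

lemma rtg_symm {v : V} {a b : NodeT G} (h : Relation.ReflTransGen (SAdj G v) a b) :
    Relation.ReflTransGen (SAdj G v) b a := by
  induction h with
  | refl => exact Relation.ReflTransGen.refl
  | tail _ hstep ih => exact (Relation.ReflTransGen.single (sadj_symm hstep)).trans ih

/-- climbing within the support of `v` to a node whose current set contains `v`. -/
lemma climb (v : V) : ∀ (k : ℕ) (l : List (V × Set V)) (hl : Valid G l), l.length ≤ k →
    v ∈ bagL G l →
    ∃ (m : List (V × Set V)) (hm : Valid G m), v ∈ Cof m ∧ v ∈ bagL G m ∧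
      Relation.ReflTransGen (SAdj G v) ⟨l, hl⟩ ⟨m, hm⟩ := by
  intro k
  induction k with
  | zero =>
    intro l hl hlen _
    have := List.length_pos_iff.2 (valid_ne_nil hl)
    omega
  | succ k ih =>
    intro l hl hlen hv
    by_cases hvC : v ∈ Cof l
    · exact ⟨l, hl, hvC, hv, Relation.ReflTransGen.refl⟩
    · obtain ⟨w, C, rest, rfl⟩ := valid_shape hl
      rcases eq_or_ne rest [] with rfl | hrest
      · exfalso
        cases hl with
        | center v₀ =>
          rcases mem_bagL_iff.1 hv with ⟨-, hdisj⟩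
          simp only [Cof_cons] at hvC
          rcases hdisj with hC | hno | hpath
          · exact hvC hC
          · obtain ⟨z, hz, hadj⟩ := hno
            simp only [Cof_cons] at hz
            exact hvC (compIn_closed hz (Set.mem_univ v) hadj)
          · simp only [pathOf_cons, pathOf_nil, List.mem_singleton] at hpath
            rw [hpath] at hvC
            exact hvC (repSet_mem ⟨v₀, mem_compIn_self (Set.mem_univ v₀)⟩)
      · obtain ⟨y, rest', rfl⟩ : ∃ y rest', rest = y :: rest' := by
          cases rest
          · exact absurd rfl hrest
          · exact ⟨_, _, rfl⟩
        have hty : Valid G (y :: rest') := (valid_cons_inv hl).1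
        obtain ⟨-, v₀, hv₀, hv₀', hx2, hx1⟩ := valid_cons_inv hl
        simp only at hx2 hx1
        have hIy : InvH G y.1 y.2 rest' := valid_inv hty y.1 y.2 rest' (by simp)
        obtain ⟨hadjw, hwy2, hwD, z₀, hz₀C, hwz₀⟩ := pivot_spec hIy hv₀ hv₀'
        rw [← hx2] at hadjw hwy2 hwD hz₀C hwz₀
        rw [← hx1] at hadjw hwy2 hwD hwz₀
        have hvbagp : v ∈ bagL G (y :: rest') := by
          rcases mem_bagL_iff.1 hv with ⟨hnpc, hdisj⟩
          simp only [Cof_cons] at hvC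
          rcases hdisj with hC | hno | hpath
          · exact absurd hC hvC
          · obtain ⟨z, hzC, hadjzv⟩ := hno
            simp only [Cof_cons] at hzC
            by_cases hvy2 : v ∈ y.2
            · by_cases hvn : v ∈ ncv G y.1
              · exact mem_bagL_iff.2 ⟨mem_npc_of_mem (by simp) hvn, Or.inl hvy2⟩
              · exfalso
                rw [hx2] at hzC
                have := compIn_closed hzC ((Set.mem_diff v).2 ⟨hvy2, hvn⟩) hadjzv
                rw [← hx2] at this
                exact hvC this
            · have hint := hIy.interf v ⟨z, cof_cons_subset hl hzC, hadjzv⟩ hvy2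
              refine mem_bagL_iff.2 ⟨?_, Or.inr (Or.inl ⟨z, ?_, hadjzv⟩)⟩
              · simpa using hint
              · simpa using cof_cons_subset hl hzC
          · simp only [pathOf_cons, List.mem_cons] at hpath
            rcases hpath with rfl | hpath'
            · -- v is the pivot w
              exact mem_bagL_iff.2
                ⟨mem_npc_of_mem (by simp) (mem_ncv_of_adj hadjw), Or.inl hwy2⟩
            · have hmemp : v ∈ pathOf (y :: rest') := by
                simp only [pathOf_cons, List.mem_cons]
                exact hpath'
              exact mem_bagL_iff.2 ⟨self_mem_npc hmemp, Or.inr (Or.inr hmemp)⟩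
        have hstep : SAdj G v ⟨(w, C) :: y :: rest', hl⟩ ⟨y :: rest', hty⟩ :=
          ⟨hv, hvbagp, adj_parent_cons hl hty⟩
        obtain ⟨m, hm, h1', h2', h3'⟩ := ih (y :: rest') hty
          (by simp only [List.length_cons] at hlen ⊢; omega) hvbagp
        exact ⟨m, hm, h1', h2', Relation.ReflTransGen.head hstep h3'⟩

lemma chain_drop (v : V) : ∀ (l' : List (V × Set V)), Valid G l' →
    ∀ (l : List (V × Set V)), Valid G l →
    v ∈ Cof l' → v ∈ Cof l → l.length ≤ l'.length →
    l = l'.drop (l'.length - l.length) := by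
  intro l'
  induction l' with
  | nil => intro h; exact absurd rfl (valid_ne_nil h)
  | cons x' t' ih =>
    intro hl' l hl hv' hv hlen
    rcases eq_or_lt_of_le hlen with heq | hlt
    · have hEq := chain_eq hl hl' hv hv' heq
      have h0 : (x' :: t').length - l.length = 0 := by omega
      rw [h0, List.drop_zero]
      exact hEq
    · have hlpos : 1 ≤ l.length := List.length_pos_iff.2 (valid_ne_nil hl)
      obtain ⟨y', r', rfl⟩ : ∃ y' r', t' = y' :: r' := by
        cases t' with
        | nil =>
          simp only [List.length_cons, List.length_nil] at hlt
          omega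
        | cons a b => exact ⟨_, _, rfl⟩
      have hty' : Valid G (y' :: r') := (valid_cons_inv hl').1
      have hv'' : v ∈ Cof (y' :: r') := cof_cons_subset hl' hv'
      have hrec := ih hty' l hl hv'' hv (by simp only [List.length_cons] at hlt ⊢; omega)
      have harith : (x' :: y' :: r').length - l.length
          = ((y' :: r').length - l.length) + 1 := by
        simp only [List.length_cons] at hlt ⊢
        omega
      rw [harith, List.drop_succ_cons]
      exact hrec

lemma chain_connect (v : V) : ∀ (l' : List (V × Set V)) (hl' : Valid G l')
    (l : List (V × Set V)) (hl : Valid G l),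
    v ∈ Cof l' → v ∈ Cof l → v ∈ bagL G l' → v ∈ bagL G l → l.length ≤ l'.length →
    Relation.ReflTransGen (SAdj G v) ⟨l', hl'⟩ ⟨l, hl⟩ := by
  intro l'
  induction l' with
  | nil => intro h; exact absurd rfl (valid_ne_nil h)
  | cons x' t' ih =>
    intro hl' l hl hv' hv hb' hb hlen
    rcases eq_or_lt_of_le hlen with heq | hlt
    · have hEq := chain_eq hl hl' hv hv' heq
      subst hEq
      exact Relation.ReflTransGen.refl
    · have hlpos : 1 ≤ l.length := List.length_pos_iff.2 (valid_ne_nil hl)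
      obtain ⟨y', r', rfl⟩ : ∃ y' r', t' = y' :: r' := by
        cases t' with
        | nil =>
          simp only [List.length_cons, List.length_nil] at hlt
          omega
        | cons a b => exact ⟨_, _, rfl⟩
      have hty' : Valid G (y' :: r') := (valid_cons_inv hl').1
      have hv'' : v ∈ Cof (y' :: r') := cof_cons_subset hl' hv'
      have hlen' : l.length ≤ (y' :: r').length := by
        simp only [List.length_cons] at hlt ⊢
        omega
      have hbag'' : v ∈ bagL G (y' :: r') := by
        refine mem_bagL_iff.2 ⟨?_, Or.inl hv''⟩
        have hd := chain_drop v (y' :: r') hty' l hl hv'' hv hlen'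
        have hsub : ∀ t ∈ pathOf l, t ∈ pathOf (y' :: r') := by
          intro t ht
          rw [hd] at ht
          have : pathOf ((y' :: r').drop ((y' :: r').length - l.length))
              = (pathOf (y' :: r')).drop ((y' :: r').length - l.length) := by
            simp [pathOf, List.map_drop]
          rw [this] at ht
          exact List.drop_subset _ _ ht
        exact npc_mono hsub (bagL_subset_npc _ hb)
      exact Relation.ReflTransGen.head ⟨hb', hbag'', adj_parent_cons hl' hty'⟩
        (ih hty' l hl hv'' hv hbag'' hb hlen')

variable (G) in
noncomputable def TD [Finite V] : TreeDecomp G where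
  ι := NodeT G
  tree := parentGraph (parentN G)
  isTree := treeN_isTree
  bag := fun t => bagL G t.1
  bag_vert := by
    intro v
    have hc : Valid G [(repSet (compIn G Set.univ v), compIn G Set.univ v)] :=
      Valid.center v
    have hv : v ∈ Cof [(repSet (compIn G Set.univ v), compIn G Set.univ v)] := by
      simp only [Cof_cons]
      exact mem_compIn_self (Set.mem_univ v)
    obtain ⟨l', hval, hvb⟩ := capture v _ _ hc hv le_rfl
    exact ⟨⟨l', hval⟩, hvb⟩
  bag_edge := by
    intro u v huv
    have hc : Valid G [(repSet (compIn G Set.univ u), compIn G Set.univ u)] :=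
      Valid.center u
    have hu : u ∈ Cof [(repSet (compIn G Set.univ u), compIn G Set.univ u)] := by
      simp only [Cof_cons]
      exact mem_compIn_self (Set.mem_univ u)
    have hv : v ∈ Cof [(repSet (compIn G Set.univ u), compIn G Set.univ u)] := by
      simp only [Cof_cons]
      exact compIn_closed (mem_compIn_self (Set.mem_univ u)) (Set.mem_univ v) huv
    obtain ⟨l', hval, hub, hvb⟩ := captureEdge u v huv _ _ hc hu hv le_rfl
    exact ⟨⟨l', hval⟩, hub, hvb⟩
  bag_conn := by
    intro v
    refine induce_connected_of_reach _ _ ?_ ?_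
    · -- nonempty
      have hc : Valid G [(repSet (compIn G Set.univ v), compIn G Set.univ v)] :=
        Valid.center v
      have hv : v ∈ Cof [(repSet (compIn G Set.univ v), compIn G Set.univ v)] := by
        simp only [Cof_cons]
        exact mem_compIn_self (Set.mem_univ v)
      obtain ⟨l', hval, hvb⟩ := capture v _ _ hc hv le_rfl
      exact ⟨⟨l', hval⟩, hvb⟩
    · rintro ⟨l, hl⟩ ha ⟨l₂, hl₂⟩ hb
      obtain ⟨m1, hm1, hc1, hb1, hr1⟩ := climb v l.length l hl le_rfl ha
      obtain ⟨m2, hm2, hc2, hb2, hr2⟩ := climb v l₂.length l₂ hl₂ le_rfl hb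
      rcases le_total m2.length m1.length with hle | hle
      · have hcc := chain_connect v m1 hm1 m2 hm2 hc1 hc2 hb1 hb2 hle
        exact hr1.trans (hcc.trans (rtg_symm hr2))
      · have hcc := chain_connect v m2 hm2 m1 hm1 hc2 hc1 hb2 hb1 hle
        exact hr1.trans ((rtg_symm hcc).trans (rtg_symm hr2))

end Decomp

/-- Let `d ≥ 2` and `s ≥ 3` be integers and let `G` be a
`{K_{1,d}, P_s}`-free graph. Then `tree-α(G) ≤ (d−1)(s−2)`. -/
theorem treeIndepNum_le_of_star_path_free
    (d s : ℕ) (hd : 2 ≤ d) (hs : 3 ≤ s)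
    {V : Type} [Fintype V] (G : SimpleGraph V)
    (h1 : Free (star d) G) (h2 : Free (SimpleGraph.pathGraph s) G) :
    treeIndepNum G ≤ (d - 1) * (s - 2) := by
  classical
  cases isEmpty_or_nonempty V with
  | inl hE =>
    let hD : TreeDecomp G :=
      { ι := Unit
        tree := parentGraph (fun _ => ())
        isTree := parentGraph_isTree (fun _ => ()) (fun _ => 0) ()
          rfl (fun a ha => absurd (Subsingleton.elim a ()) ha)
        bag := fun _ => ∅
        bag_vert := fun v => (IsEmpty.false v).elim
        bag_edge := fun u _ _ => (IsEmpty.false u).elim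
        bag_conn := fun v => (IsEmpty.false v).elim }
    have halpha : hD.alpha ≤ (d - 1) * (s - 2) := by
      refine csSup_le ⟨_, ⟨(), rfl⟩⟩ ?_
      rintro n ⟨t, rfl⟩
      refine csSup_le ⟨0, ∅, by simp, by simp [IsIndepSet], rfl⟩ ?_
      rintro n ⟨T, hsub, hind, rfl⟩
      have hTe : T = ∅ := by
        rw [Finset.eq_empty_iff_forall_notMem]
        intro x hx
        exact (hsub (by exact_mod_cast hx) : x ∈ (∅ : Set V))
      simp [hTe]
    exact le_trans (Nat.sInf_le ⟨hD, rfl⟩) halpha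
  | inr hN =>
    have halpha : (TD G).alpha ≤ (d - 1) * (s - 2) := by
      refine csSup_le ⟨_, ⟨(hubN : NodeT G), rfl⟩⟩ ?_
      rintro n ⟨t, rfl⟩
      refine csSup_le ⟨0, ∅, by simp, by simp [IsIndepSet], rfl⟩ ?_
      rintro n ⟨T, hsub, hind, rfl⟩
      exact bag_card_le h1 h2 hd hs t.2 T hsub hind
    exact le_trans (Nat.sInf_le ⟨TD G, rfl⟩) halpha

end PaperTIN
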